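/- Let U be the algebra of affiliated operators of a finite von Neumann algebra. Then every finitely generated U-module M splits as M = TM ⊕ PM, where TM is the largest submodule of M with dim_U(TM) = 0 and PM = M/TM is finitely generated projective. -/

import Mathlib

open scoped ENNReal

/-- An abstraction of the pair `A ⊆ U = U(A)`, where `A` is a finite von Neumann algebra
(with a fixed normal faithful trace) and `U` is its algebra of affiliated operators,
together with the trace-induced dimension functions on `A`- and on `U`-modules.
The fields record the facts used in the paper: `U` is the classical ring of quotients
of `A`, `U` is von Neumann regular and self-injective, and the dimensions are
isomorphism-invariant, additive on short exact sequences, continuous with respect to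
suprema over finitely generated projective submodules, and faithful on finitely
generated projective modules. -/
structure AffiliatedOperatorsSetup (A U : Type) [Ring A] [Ring U] where
  /-- the inclusion of `A` into `U` -/
  incl : A →+* U
  incl_injective : Function.Injective incl
  /-- `U` is von Neumann regular -/
  regular : ∀ u : U, ∃ x : U, u * x * u = u
  /-- `U` is self-injective -/
  selfInjective : Module.Injective U U
  /-- every element of `U` is a left fraction `s⁻¹ a` with `a, s ∈ A`, `s` regular:
  `U = Q_cl(A)` -/
  fraction : ∀ u : U, ∃ a s : A,
      (∀ b : A, s * b = 0 → b = 0) ∧ (∀ b : A, b * s = 0 → b = 0) ∧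
      incl s * u = incl a
  /-- regular elements of `A` become invertible in `U` -/
  regularUnit : ∀ s : A, (∀ b : A, s * b = 0 → b = 0) → (∀ b : A, b * s = 0 → b = 0) →
      IsUnit (incl s)
  /-- the trace-induced dimension of an `A`-module -/
  dimA : ∀ (M : Type) [AddCommGroup M] [Module A M], ℝ≥0∞
  /-- the trace-induced dimension of a `U`-module -/
  dimU : ∀ (M : Type) [AddCommGroup M] [Module U M], ℝ≥0∞
  dimA_congr : ∀ (M N : Type) [AddCommGroup M] [Module A M] [AddCommGroup N] [Module A N],
      (M ≃ₗ[A] N) → dimA M = dimA N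
  dimU_congr : ∀ (M N : Type) [AddCommGroup M] [Module U M] [AddCommGroup N] [Module U N],
      (M ≃ₗ[U] N) → dimU M = dimU N
  dimA_add : ∀ (M : Type) [AddCommGroup M] [Module A M] (N : Submodule A M),
      dimA M = dimA ↥N + dimA (M ⧸ N)
  dimU_add : ∀ (M : Type) [AddCommGroup M] [Module U M] (N : Submodule U M),
      dimU M = dimU ↥N + dimU (M ⧸ N)
  dimA_sup : ∀ (M : Type) [AddCommGroup M] [Module A M],
      dimA M = ⨆ (N : Submodule A M) (_ : N.FG ∧ Module.Projective A ↥N), dimA ↥N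
  dimU_sup : ∀ (M : Type) [AddCommGroup M] [Module U M],
      dimU M = ⨆ (N : Submodule U M) (_ : N.FG ∧ Module.Projective U ↥N), dimU ↥N
  dimA_faithful : ∀ (M : Type) [AddCommGroup M] [Module A M],
      Module.Finite A M → Module.Projective A M → (dimA M = 0 ↔ Subsingleton M)
  dimU_faithful : ∀ (M : Type) [AddCommGroup M] [Module U M],
      Module.Finite U M → Module.Projective U M → (dimU M = 0 ↔ Subsingleton M)

section AOSHelpers

variable {A U : Type} [Ring A] [Ring U]

namespace AffiliatedOperatorsSetup

variable (S : AffiliatedOperatorsSetup A U)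

lemma dim_submodule_le (M : Type) [AddCommGroup M] [Module U M] (W : Submodule U M) :
    S.dimU ↥W ≤ S.dimU M := by
  rw [S.dimU_add M W]; exact le_self_add

lemma dim_quot_le (M : Type) [AddCommGroup M] [Module U M] (W : Submodule U M) :
    S.dimU (M ⧸ W) ≤ S.dimU M := by
  rw [S.dimU_add M W]; exact le_add_self

lemma dim_subsingleton (M : Type) [AddCommGroup M] [Module U M] [Subsingleton M] :
    S.dimU M = 0 :=
  (S.dimU_faithful M inferInstance inferInstance).mpr inferInstance

lemma dim_le_of_injective {M N : Type} [AddCommGroup M] [Module U M] [AddCommGroup N]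
    [Module U N] (f : M →ₗ[U] N) (hf : Function.Injective f) :
    S.dimU M ≤ S.dimU N := by
  have h1 : S.dimU M = S.dimU ↥(LinearMap.range f) :=
    S.dimU_congr _ _ (LinearEquiv.ofInjective f hf)
  rw [h1]; exact S.dim_submodule_le N _

lemma dim_le_of_surjective {M N : Type} [AddCommGroup M] [Module U M] [AddCommGroup N]
    [Module U N] (f : M →ₗ[U] N) (hf : Function.Surjective f) :
    S.dimU N ≤ S.dimU M := by
  have h1 : S.dimU (M ⧸ LinearMap.ker f) = S.dimU N :=
    S.dimU_congr _ _ (f.quotKerEquivOfSurjective hf)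
  rw [← h1]; exact S.dim_quot_le M _

lemma dim_mono {M : Type} [AddCommGroup M] [Module U M] {p q : Submodule U M} (h : p ≤ q) :
    S.dimU ↥p ≤ S.dimU ↥q :=
  S.dim_le_of_injective (Submodule.inclusion h) (Submodule.inclusion_injective h)

lemma dim_sup_le {M : Type} [AddCommGroup M] [Module U M] (p q : Submodule U M) :
    S.dimU ↥(p ⊔ q) ≤ S.dimU ↥p + S.dimU ↥q := by
  have h1 := S.dimU_add ↥(p ⊔ q) (Submodule.comap (p ⊔ q).subtype q)
  have h2 : S.dimU ↥(Submodule.comap (p ⊔ q).subtype q) = S.dimU ↥q :=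
    S.dimU_congr _ _ (Submodule.comapSubtypeEquivOfLe le_sup_right)
  have h3 : S.dimU (↥(p ⊔ q) ⧸ Submodule.comap (p ⊔ q).subtype q)
      = S.dimU (↥p ⧸ Submodule.comap p.subtype (p ⊓ q)) :=
    (S.dimU_congr _ _ (LinearMap.quotientInfEquivSupQuotient p q)).symm
  rw [h1, h2, h3, add_comm]
  exact add_le_add (S.dim_quot_le ↥p _) le_rfl

lemma dim_quotBy {M : Type} [AddCommGroup M] [Module U M] {p N : Submodule U M} (h : p ≤ N) :
    S.dimU ↥N = S.dimU ↥p + S.dimU ↥(N.map p.mkQ) := by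
  set f : ↥N →ₗ[U] M ⧸ p := p.mkQ.comp N.subtype with hf
  have hker : Submodule.comap N.subtype p = LinearMap.ker f := by
    rw [hf, LinearMap.ker_comp, Submodule.ker_mkQ]
  have hrange : LinearMap.range f = N.map p.mkQ := by
    rw [hf, LinearMap.range_comp, Submodule.range_subtype]
  have h1 := S.dimU_add ↥N (Submodule.comap N.subtype p)
  have h2 : S.dimU ↥(Submodule.comap N.subtype p) = S.dimU ↥p :=
    S.dimU_congr _ _ (Submodule.comapSubtypeEquivOfLe h)
  have h3 : S.dimU (↥N ⧸ Submodule.comap N.subtype p) = S.dimU ↥(N.map p.mkQ) :=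
    S.dimU_congr _ _ (((Submodule.quotEquivOfEq _ _ hker).trans
      f.quotKerEquivRange).trans (LinearEquiv.ofEq _ _ hrange))
  rw [h1, h2, h3]

/-- the sum of all zero-dimensional submodules has dimension zero -/
lemma dim_torsion_zero (M : Type) [AddCommGroup M] [Module U M] :
    S.dimU ↥(sSup {N : Submodule U M | S.dimU ↥N = 0}) = 0 := by
  set Z : Set (Submodule U M) := {N : Submodule U M | S.dimU ↥N = 0} with hZ
  have hbot : (⊥ : Submodule U M) ∈ Z := S.dim_subsingleton ↥(⊥ : Submodule U M)
  have hZne : Z.Nonempty := ⟨⊥, hbot⟩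
  have hZdir : DirectedOn (· ≤ ·) Z := by
    intro p hp q hq
    refine ⟨p ⊔ q, ?_, le_sup_left, le_sup_right⟩
    have := S.dim_sup_le p q
    rw [hp, hq, add_zero] at this
    exact le_antisymm this zero_le
  set T : Submodule U M := sSup Z with hTdef
  rw [S.dimU_sup]
  refine le_antisymm (iSup_le fun P => iSup_le fun hP => ?_) zero_le
  have hPfg : (P.map T.subtype).FG := Submodule.FG.map T.subtype hP.1
  have hle : P.map T.subtype ≤ T := Submodule.map_subtype_le T P
  obtain ⟨N, hNZ, hPN⟩ :=
    (CompleteLattice.isCompactElement_iff_le_of_directed_sSup_le _ _).mp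
      ((Submodule.fg_iff_compact _).mp hPfg) Z hZne hZdir hle
  have h1 : S.dimU ↥P = S.dimU ↥(P.map T.subtype) :=
    S.dimU_congr _ _ (Submodule.equivMapOfInjective T.subtype (Submodule.injective_subtype T) P)
  have h2 : S.dimU ↥(P.map T.subtype) ≤ S.dimU ↥N := S.dim_mono hPN
  rw [hNZ] at h2
  rw [h1]
  exact h2

/-- the quotient by the torsion part has no nonzero zero-dimensional submodules -/
lemma quot_torsionfree {M : Type} [AddCommGroup M] [Module U M]
    (T : Submodule U M) (hT : T = sSup {N : Submodule U M | S.dimU ↥N = 0})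
    (Nb : Submodule U (M ⧸ T)) (h : S.dimU ↥Nb = 0) : Nb = ⊥ := by
  have hdT : S.dimU ↥T = 0 := by rw [hT]; exact S.dim_torsion_zero M
  have hTN : T ≤ Nb.comap T.mkQ := by
    intro x hx
    have hx0 : T.mkQ x = 0 := (Submodule.Quotient.mk_eq_zero T).mpr hx
    have : T.mkQ x ∈ Nb := by rw [hx0]; exact Nb.zero_mem
    exact this
  have hmap : (Nb.comap T.mkQ).map T.mkQ = Nb :=
    Submodule.map_comap_eq_of_surjective (Submodule.mkQ_surjective T) Nb
  have key : S.dimU ↥(Nb.comap T.mkQ) = 0 := by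
    have h2 := S.dim_quotBy hTN
    rw [hmap, h, hdT, add_zero] at h2
    exact h2
  have hNT : Nb.comap T.mkQ ≤ T := (le_sSup (show Nb.comap T.mkQ ∈ {N : Submodule U M | S.dimU ↥N = 0} from key)).trans hT.ge
  rw [← hmap, Submodule.eq_bot_iff]
  rintro x ⟨y, hyN, rfl⟩
  exact (Submodule.Quotient.mk_eq_zero T).mpr (hNT hyN)

include S in
lemma injective_pi (n : ℕ) : Module.Injective U (Fin n → U) := by
  constructor
  intro X Y _ _ _ _ f hf g
  have H : ∀ j : Fin n, ∃ h : Y →ₗ[U] U, ∀ x, h (f x) = (LinearMap.proj j).comp g x :=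
    fun j => S.selfInjective.1 f hf ((LinearMap.proj j).comp g)
  choose h hh using H
  exact ⟨LinearMap.pi h, fun x => funext fun j => hh j x⟩

end AffiliatedOperatorsSetup

end AOSHelpers

section KeyLemma

namespace AffiliatedOperatorsSetup

variable {A U : Type} [Ring A] [Ring U] (S : AffiliatedOperatorsSetup A U)

include S in
/-- In an injective module, a submodule whose quotient has no nonzero zero-dimensional
submodules is a direct summand. -/
lemma key (Q : Type) [AddCommGroup Q] [Module U Q] (hQ : Module.Injective U Q)
    (T' : Submodule U Q)
    (H : ∀ N : Submodule U (Q ⧸ T'), S.dimU ↥N = 0 → N = ⊥) :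
    ∃ C', IsCompl T' C' := by
  have mk0 : ∀ (D : Submodule U Q) (x : Q), D.mkQ x = 0 ↔ x ∈ D := fun D x => by
    rw [Submodule.mkQ_apply, Submodule.Quotient.mk_eq_zero]
  -- Zorn: a maximal submodule `C` with `C ⊓ T' = ⊥`
  obtain ⟨C, -, hCmax⟩ := zorn_le_nonempty₀ {C : Submodule U Q | C ⊓ T' = ⊥}
    (fun c hc hchain y hy => by
      refine ⟨sSup c, ?_, fun z hz => le_sSup hz⟩
      rw [Set.mem_setOf_eq, Submodule.eq_bot_iff]
      intro x hx
      rw [Submodule.mem_inf] at hx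
      obtain ⟨N, hNc, hxN⟩ := (Submodule.mem_sSup_of_directed ⟨y, hy⟩
        hchain.directedOn).mp hx.1
      have hmem : x ∈ N ⊓ T' := ⟨hxN, hx.2⟩
      rw [hc hNc] at hmem
      exact (Submodule.mem_bot U).mp hmem)
    ⊥ (by simp)
  have hCT : C ⊓ T' = ⊥ := hCmax.1
  -- extend the (injective on `T'`) map `mkQ : T' → Q ⧸ C` backwards
  have hiinj : Function.Injective (C.mkQ ∘ₗ T'.subtype) := by
    rw [← LinearMap.ker_eq_bot, LinearMap.ker_comp, Submodule.ker_mkQ, Submodule.eq_bot_iff]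
    intro x hx
    have hmem : (x : Q) ∈ C ⊓ T' := ⟨hx, x.2⟩
    rw [hCT] at hmem
    exact Subtype.ext ((Submodule.mem_bot U).mp hmem)
  obtain ⟨h, hh⟩ := hQ.1 (C.mkQ ∘ₗ T'.subtype) hiinj T'.subtype
  -- essentiality of the image of `T'` in `Q ⧸ C`
  have essβ : ∀ W : Submodule U (Q ⧸ C), W ≠ ⊥ →
      ∃ t : Q, t ∈ T' ∧ t ≠ 0 ∧ C.mkQ t ∈ W := by
    intro W hW
    have hCW : C ≤ W.comap C.mkQ := by
      intro x hx
      have hx0 : C.mkQ x = 0 := (mk0 C x).mpr hx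
      show C.mkQ x ∈ W
      rw [hx0]; exact W.zero_mem
    have hne : ¬ W.comap C.mkQ ≤ C := by
      obtain ⟨y, hyW, hy0⟩ := (Submodule.ne_bot_iff W).mp hW
      obtain ⟨x, rfl⟩ := Submodule.mkQ_surjective C y
      intro hle
      exact hy0 ((mk0 C x).mpr (hle (show x ∈ W.comap C.mkQ from hyW)))
    have hmem : W.comap C.mkQ ⊓ T' ≠ ⊥ := fun h0 => hne (hCmax.2 h0 hCW)
    obtain ⟨t, htm, ht0⟩ := (Submodule.ne_bot_iff _).mp hmem
    rw [Submodule.mem_inf] at htm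
    exact ⟨t, htm.2, ht0, htm.1⟩
  -- the extension is injective
  have hpT : ∀ t ∈ T', (h ∘ₗ C.mkQ) t = t := fun t ht => hh ⟨t, ht⟩
  have hess : ∀ W : Submodule U Q, W ≤ LinearMap.range (h ∘ₗ C.mkQ) → W ⊓ T' = ⊥ → W = ⊥ := by
    intro W hWE hWT
    by_contra hW
    have hW2 : W.comap h ≠ ⊥ := by
      obtain ⟨w, hwW, hw0⟩ := (Submodule.ne_bot_iff W).mp hW
      obtain ⟨x, hx⟩ := hWE hwW
      refine (Submodule.ne_bot_iff _).mpr ⟨C.mkQ x, ?_, ?_⟩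
      · show h (C.mkQ x) ∈ W
        rw [show h (C.mkQ x) = w from hx]; exact hwW
      · intro h0
        apply hw0
        rw [← hx]
        show h (C.mkQ x) = 0
        rw [h0, map_zero]
    obtain ⟨t, htT, ht0, htW⟩ := essβ (W.comap h) hW2
    have htWm : h (C.mkQ t) ∈ W := htW
    have htt : h (C.mkQ t) = t := hpT t htT
    rw [htt] at htWm
    have : t ∈ W ⊓ T' := ⟨htWm, htT⟩
    rw [hWT] at this
    exact ht0 ((Submodule.mem_bot U).mp this)
  -- the image of the range of the extension in `Q ⧸ T'` has dimension zero
  set X : Submodule U (Q ⧸ T') := (LinearMap.range (h ∘ₗ C.mkQ)).map T'.mkQ with hX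
  have hXdim : S.dimU ↥X = 0 := by
    rw [S.dimU_sup]
    refine le_antisymm (iSup_le fun P => iSup_le fun hP => ?_) zero_le
    haveI hPproj : Module.Projective U ↥P := hP.2
    have hP'X : P.map X.subtype ≤ X := Submodule.map_subtype_le X P
    have eP : ↥P ≃ₗ[U] ↥(P.map X.subtype) :=
      Submodule.equivMapOfInjective X.subtype X.injective_subtype P
    haveI : Module.Projective U ↥(P.map X.subtype) := Module.Projective.of_equiv eP
    have hP'bot : P.map X.subtype = ⊥ := by
      set P' : Submodule U (Q ⧸ T') := P.map X.subtype with hP'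
      set Ebar : Submodule U Q := (P'.comap T'.mkQ) ⊓ LinearMap.range (h ∘ₗ C.mkQ) with hEbar
      have hfmem : ∀ x ∈ Ebar, T'.mkQ x ∈ P' := fun x hx => hx.1
      set f : ↥Ebar →ₗ[U] ↥P' := (T'.mkQ).restrict hfmem with hfdef
      have hfval : ∀ z : ↥Ebar, (f z : Q ⧸ T') = T'.mkQ (z : Q) := fun z => rfl
      have hfsurj : Function.Surjective f := by
        rintro ⟨y, hy⟩
        obtain ⟨x, hxE, hxy⟩ := Submodule.mem_map.mp (hP'X hy)
        have hxm : x ∈ Ebar := ⟨show T'.mkQ x ∈ P' by rw [hxy]; exact hy, hxE⟩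
        exact ⟨⟨x, hxm⟩, Subtype.ext (by rw [hfval]; exact hxy)⟩
      obtain ⟨s, hs⟩ := Module.projective_lifting_property f LinearMap.id hfsurj
      have hsval : ∀ z : ↥P', f (s z) = z := fun z => LinearMap.ext_iff.mp hs z
      have hWbot : LinearMap.range (Ebar.subtype ∘ₗ s) = ⊥ := by
        apply hess
        · rintro x ⟨z, rfl⟩
          exact (s z).2.2
        · rw [Submodule.eq_bot_iff]
          intro x hx
          rw [Submodule.mem_inf] at hx
          obtain ⟨⟨z, rfl⟩, hxT⟩ := hx
          have h0 : T'.mkQ ((Ebar.subtype ∘ₗ s) z) = 0 := (mk0 T' _).mpr hxT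
          have hz0 : z = 0 := by
            have hzz := hsval z
            have hf0 : f (s z) = 0 := Subtype.ext (by rw [hfval]; exact h0)
            rw [hzz] at hf0
            exact hf0
          rw [hz0, map_zero]
      rw [Submodule.eq_bot_iff]
      intro y hy
      have hs0 : s ⟨y, hy⟩ = 0 := by
        have hmem : (Ebar.subtype ∘ₗ s) ⟨y, hy⟩ ∈ LinearMap.range (Ebar.subtype ∘ₗ s) :=
          LinearMap.mem_range_self _ _
        rw [hWbot] at hmem
        exact Subtype.ext ((Submodule.mem_bot U).mp hmem)
      have hfy := hsval ⟨y, hy⟩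
      rw [hs0, map_zero] at hfy
      exact (congrArg Subtype.val hfy.symm : y = 0)
    haveI : Subsingleton ↥(P.map X.subtype) := by rw [hP'bot]; infer_instance
    haveI : Subsingleton ↥P := Equiv.subsingleton eP.toEquiv
    exact le_of_eq (S.dim_subsingleton ↥P)
  have hXbot := H _ hXdim
  have hET : LinearMap.range (h ∘ₗ C.mkQ) ≤ T' := by
    intro x hx
    have hmem : T'.mkQ x ∈ (LinearMap.range (h ∘ₗ C.mkQ)).map T'.mkQ :=
      Submodule.mem_map_of_mem hx
    rw [← hX, hXbot] at hmem
    exact (mk0 T' x).mp ((Submodule.mem_bot _).mp hmem)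
  have hcod : ∀ x : Q, (h ∘ₗ C.mkQ) x ∈ T' := fun x => hET (LinearMap.mem_range_self _ x)
  refine ⟨_, LinearMap.isCompl_of_proj
    (f := LinearMap.codRestrict T' (h ∘ₗ C.mkQ) hcod) ?_⟩
  intro x
  exact Subtype.ext (hpT x x.2)

end AffiliatedOperatorsSetup

end KeyLemma

/-- let `U` be the algebra of affiliated operators of a finite von Neumann
algebra `A`. Every finitely generated `U`-module `M` splits as `M = TM ⊕ PM`, where
`TM` is the largest submodule of `M` with `dim_U(TM) = 0` and `PM = M / TM` is finitely
generated projective. -/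
theorem fg_module_splits_torsion_projective (A U : Type) [Ring A] [Ring U]
    (S : AffiliatedOperatorsSetup A U)
    (M : Type) [AddCommGroup M] [Module U M] [Module.Finite U M] :
    ∃ T : Submodule U M,
      S.dimU ↥T = 0 ∧ (∀ N : Submodule U M, S.dimU ↥N = 0 → N ≤ T) ∧
      (∃ q : Submodule U M, IsCompl T q) ∧
      Module.Finite U (M ⧸ T) ∧ Module.Projective U (M ⧸ T) := by
  classical
  set T : Submodule U M := sSup {N : Submodule U M | S.dimU ↥N = 0} with hT
  have hTdim : S.dimU ↥T = 0 := S.dim_torsion_zero M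
  have hTmax : ∀ N : Submodule U M, S.dimU ↥N = 0 → N ≤ T := fun N hN =>
    le_sSup (show N ∈ {N : Submodule U M | S.dimU ↥N = 0} from hN)
  -- present M as a quotient of a finite free module
  obtain ⟨n, π, hπ⟩ := Module.Finite.exists_fin' U M
  set f : (Fin n → U) →ₗ[U] M ⧸ T := T.mkQ ∘ₗ π with hf
  have hfsurj : Function.Surjective f := (Submodule.mkQ_surjective T).comp hπ
  have hker : T.comap π = LinearMap.ker f := by
    rw [hf, LinearMap.ker_comp, Submodule.ker_mkQ]
  have eQM : ((Fin n → U) ⧸ T.comap π) ≃ₗ[U] M ⧸ T :=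
    (Submodule.quotEquivOfEq _ _ hker).trans (f.quotKerEquivOfSurjective hfsurj)
  -- the quotient has no zero-dimensional submodules, transported to the free module
  have HQ : ∀ N : Submodule U ((Fin n → U) ⧸ T.comap π), S.dimU ↥N = 0 → N = ⊥ := by
    intro N hN
    have e := eQM.submoduleMap N
    have hNd : S.dimU ↥(N.map (eQM : ((Fin n → U) ⧸ T.comap π) →ₗ[U] M ⧸ T)) = 0 :=
      (S.dimU_congr _ _ e).symm.trans hN
    have hbot := S.quot_torsionfree T hT _ hNd
    rw [Submodule.eq_bot_iff]
    intro x hx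
    have hmem : eQM x ∈ N.map (eQM : ((Fin n → U) ⧸ T.comap π) →ₗ[U] M ⧸ T) :=
      ⟨x, hx, rfl⟩
    rw [hbot] at hmem
    exact eQM.map_eq_zero_iff.mp ((Submodule.mem_bot U).mp hmem)
  -- the preimage of T is a direct summand of the free module
  obtain ⟨C', hC'⟩ := S.key (Fin n → U) (S.injective_pi n) (T.comap π) HQ
  have e2 : ((Fin n → U) ⧸ T.comap π) ≃ₗ[U] ↥C' :=
    Submodule.quotientEquivOfIsCompl _ _ hC'
  haveI hC'proj : Module.Projective U ↥C' :=
    Module.Projective.of_split C'.subtype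
      (Submodule.projectionOnto C' (T.comap π) hC'.symm)
      (by ext x; simp [Submodule.projectionOnto_apply_left])
  haveI hMTproj : Module.Projective U (M ⧸ T) :=
    Module.Projective.of_equiv (e2.symm.trans eQM)
  -- a complement for T inside M
  obtain ⟨s, hs⟩ := Module.projective_lifting_property T.mkQ LinearMap.id
    (Submodule.mkQ_surjective T)
  have hsval : ∀ y : M ⧸ T, T.mkQ (s y) = y := fun y => LinearMap.ext_iff.mp hs y
  refine ⟨T, hTdim, hTmax, ⟨LinearMap.range s, ?_, ?_⟩, inferInstance, hMTproj⟩
  · rw [disjoint_iff, Submodule.eq_bot_iff]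
    intro x hx
    rw [Submodule.mem_inf] at hx
    obtain ⟨hxT, y, rfl⟩ := hx
    have h0 : T.mkQ (s y) = 0 := by
      rw [Submodule.mkQ_apply, Submodule.Quotient.mk_eq_zero]; exact hxT
    rw [hsval y] at h0
    rw [h0, map_zero]
  · rw [codisjoint_iff, Submodule.eq_top_iff']
    intro m
    rw [Submodule.mem_sup]
    refine ⟨m - s (T.mkQ m), ?_, s (T.mkQ m), ⟨T.mkQ m, rfl⟩, by abel⟩
    rw [← Submodule.Quotient.mk_eq_zero, ← Submodule.mkQ_apply, map_sub, hsval, sub_self]
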